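/- The monic matrix polynomials P̃_n(x) = 2^{-n} [[U_n(x), -U_{n-1}(x)],[-U_{n-1}(x), U_n(x)]], where U_n are Chebyshev polynomials of the second kind, are orthogonal with respect to the weight W(x) = (1/√(1-x²))[[1,x],[x,1]] on (-1,1), with ∫_{-1}^1 P̃_m(x) W(x) P̃_n(x)^T dx = δ_{mn} (π/4^n) Id. -/

import Mathlib

open Matrix Real Polynomial
open Polynomial.Chebyshev

noncomputable section

theorem mul_T_U (R : Type*) [CommRing R] (k m : ℤ) :
    2 * Chebyshev.T R k * Chebyshev.U R m = Chebyshev.U R (m + k) + Chebyshev.U R (m - k) := by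
  induction k using Polynomial.Chebyshev.induct with
  | zero => simp [two_mul]
  | one => rw [U_add_one, T_one]; ring
  | add_two k ih1 ih2 =>
    have h₁ := U_add_two R (m + k)
    have h₂ := U_sub_two R (m - k)
    have h₃ := T_add_two R k
    linear_combination (norm := ring_nf) 2 * Chebyshev.U R m * h₃ - h₂ - h₁ - ih2 +
      2 * (X : R[X]) * ih1
  | neg_add_one k ih1 ih2 =>
    have h₁ := U_add_two R (m + (-k - 1))
    have h₂ := U_sub_two R (m - (-k - 1))
    have h₃ := T_add_two R (-k - 1)
    linear_combination (norm := ring_nf) 2 * Chebyshev.U R m * h₃ - h₂ - h₁ - ih2 +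
      2 * (X : R[X]) * ih1

theorem U_sub_U (k : ℤ) : Chebyshev.U ℝ k - Chebyshev.U ℝ (k - 2) = 2 * Chebyshev.T ℝ k := by
  linear_combination -2 * T_eq_U_sub_X_mul_U ℝ k - U_sub_two ℝ k

theorem T_add_one' (n : ℤ) :
    Chebyshev.T ℝ (n + 1) = X * Chebyshev.U ℝ n - Chebyshev.U ℝ (n - 1) := by
  linear_combination U_add_one ℝ n - U_eq_X_mul_U_add_T ℝ n

theorem keyE (m n : ℤ) :
    Chebyshev.U ℝ m * Chebyshev.U ℝ n + Chebyshev.U ℝ (m - 1) * Chebyshev.U ℝ (n - 1)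
      - X * (Chebyshev.U ℝ (m - 1) * Chebyshev.U ℝ n + Chebyshev.U ℝ m * Chebyshev.U ℝ (n - 1))
      = Chebyshev.T ℝ (m - n) := by
  apply mul_left_cancel₀ (two_ne_zero' ℝ[X])
  have h1 := mul_T_U ℝ n m
  have h2 := mul_T_U ℝ (n + 1) (m - 1)
  rw [show m - 1 + (n + 1) = m + n by ring, show m - 1 - (n + 1) = m - n - 2 by ring] at h2
  have h3 := U_sub_U (m - n)
  have h4 := T_eq_U_sub_X_mul_U ℝ n
  have h5 := T_add_one' n
  linear_combination -2 * (Chebyshev.U ℝ m) * h4 + 2 * (Chebyshev.U ℝ (m-1)) * h5 +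
    h1 - h2 + h3

theorem keyF (m n : ℤ) :
    X * (Chebyshev.U ℝ m * Chebyshev.U ℝ n + Chebyshev.U ℝ (m - 1) * Chebyshev.U ℝ (n - 1))
      - (Chebyshev.U ℝ m * Chebyshev.U ℝ (n - 1) + Chebyshev.U ℝ (m - 1) * Chebyshev.U ℝ n)
      = Chebyshev.T ℝ (m + n + 1) := by
  apply mul_left_cancel₀ (two_ne_zero' ℝ[X])
  have h1 := mul_T_U ℝ (n + 1) m
  rw [show m + (n + 1) = m + n + 1 by ring, show m - (n + 1) = m - n - 1 by ring] at h1
  have h2 := mul_T_U ℝ n (m - 1)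
  rw [show m - 1 + n = m + n - 1 by ring, show m - 1 - n = m - n - 1 by ring] at h2
  have h3 := U_sub_U (m + n + 1)
  rw [show m + n + 1 - 2 = m + n - 1 by ring] at h3
  have h4 := T_eq_U_sub_X_mul_U ℝ n
  have h5 := T_add_one' n
  linear_combination h1 - h2 + h3 -
    2 * (Chebyshev.U ℝ m) * h5 + 2 * (Chebyshev.U ℝ (m-1)) * h4

theorem wcheb_intervalIntegrable :
    IntervalIntegrable (fun x : ℝ => (Real.sqrt (1 - x ^ 2))⁻¹) MeasureTheory.volume (-1) 1 := by
  rw [intervalIntegrable_iff_integrableOn_Ioc_of_le (by norm_num)]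
  apply intervalIntegral.integrableOn_deriv_of_nonneg (g := Real.arcsin)
  · exact Real.continuous_arcsin.continuousOn
  · intro x hx
    simpa [one_div] using Real.hasDerivAt_arcsin hx.1.ne' hx.2.ne
  · intro x hx
    positivity

theorem integral_w : ∫ x in (-1:ℝ)..1, (Real.sqrt (1 - x ^ 2))⁻¹ = π := by
  rw [intervalIntegral.integral_eq_sub_of_hasDerivAt_of_le (by norm_num)
    Real.continuous_arcsin.continuousOn
    (fun x hx => by simpa [one_div] using Real.hasDerivAt_arcsin hx.1.ne' hx.2.ne)
    wcheb_intervalIntegrable]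
  rw [Real.arcsin_one, Real.arcsin_neg_one]
  ring

theorem wT_intervalIntegrable (k : ℤ) :
    IntervalIntegrable (fun x : ℝ => (Real.sqrt (1 - x ^ 2))⁻¹ * (Chebyshev.T ℝ k).eval x)
      MeasureTheory.volume (-1) 1 :=
  wcheb_intervalIntegrable.mul_continuousOn (Polynomial.continuous _).continuousOn

theorem integral_wT_succ (j : ℕ) :
    ∫ x in (-1:ℝ)..1, (Real.sqrt (1 - x ^ 2))⁻¹ * (Chebyshev.T ℝ ((j : ℤ) + 1)).eval x = 0 := by
  set k : ℤ := (j : ℤ) + 1 with hk_def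
  have hk : (0:ℝ) < (k : ℝ) := by positivity
  set G : ℝ → ℝ := fun x =>
    -(k : ℝ)⁻¹ * (Real.sqrt (1 - x ^ 2) * (Chebyshev.U ℝ (k - 1)).eval x) with hG_def
  have hcont : ContinuousOn G (Set.Icc (-1 : ℝ) 1) := by
    apply Continuous.continuousOn
    fun_prop
  have hderiv : ∀ x ∈ Set.Ioo (-1 : ℝ) 1,
      HasDerivAt G ((Real.sqrt (1 - x ^ 2))⁻¹ * (Chebyshev.T ℝ k).eval x) x := by
    intro x hx
    have hx2 : (0:ℝ) < 1 - x ^ 2 := by nlinarith [hx.1, hx.2]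
    have hs : 0 < Real.sqrt (1 - x ^ 2) := Real.sqrt_pos.2 hx2
    have hs2 : Real.sqrt (1 - x ^ 2) ^ 2 = 1 - x ^ 2 := Real.sq_sqrt hx2.le
    have h1 : HasDerivAt (fun y : ℝ => 1 - y ^ 2) (-(2 * x)) x := by
      simpa using (hasDerivAt_pow 2 x).const_sub 1
    have h2 : HasDerivAt (fun y : ℝ => Real.sqrt (1 - y ^ 2))
        (1 / (2 * Real.sqrt (1 - x ^ 2)) * (-(2 * x))) x :=
      (Real.hasDerivAt_sqrt hx2.ne').comp x h1
    have h3 := (Chebyshev.U ℝ (k - 1)).hasDerivAt x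
    have h4 := (h2.mul h3).const_mul (-(k : ℝ)⁻¹)
    refine h4.congr_deriv ?_
    symm
    have hpoly := Chebyshev.add_one_mul_T_eq_poly_in_U (R := ℝ) (k - 1)
    rw [show k - 1 + 1 = k by ring] at hpoly
    have hev := congrArg (Polynomial.eval x) hpoly
    simp only [Polynomial.eval_mul, Polynomial.eval_add, Polynomial.eval_sub, Polynomial.eval_one,
      Polynomial.eval_X, Polynomial.eval_pow, Polynomial.eval_intCast] at hev
    have hcast : ((k - 1 : ℤ) : ℝ) + 1 = (k : ℝ) := by push_cast; ring
    rw [hcast] at hev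
    field_simp
    linear_combination hev +
      (Polynomial.eval x (Polynomial.derivative (Chebyshev.U ℝ (k - 1)))) * hs2
  rw [intervalIntegral.integral_eq_sub_of_hasDerivAt_of_le (by norm_num) hcont hderiv
    (wT_intervalIntegrable k)]
  simp [hG_def]

theorem integral_wT (k : ℤ) :
    ∫ x in (-1:ℝ)..1, (Real.sqrt (1 - x ^ 2))⁻¹ * (Chebyshev.T ℝ k).eval x
      = if k = 0 then π else 0 := by
  split_ifs with h
  · subst h
    simpa using integral_w
  · rw [← Chebyshev.T_natAbs]
    obtain ⟨j, hj⟩ : ∃ j : ℕ, k.natAbs = j + 1 := ⟨k.natAbs - 1, by omega⟩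
    rw [hj, show ((j + 1 : ℕ) : ℤ) = (j : ℤ) + 1 by push_cast; ring]
    exact integral_wT_succ j

attribute [local instance] Matrix.normedAddCommGroup Matrix.normedSpace

theorem IntervalIntegrable.smul_const' {E : Type*} [NormedAddCommGroup E] [NormedSpace ℝ E]
    {f : ℝ → ℝ} {a b : ℝ} (h : IntervalIntegrable f MeasureTheory.volume a b) (c : E) :
    IntervalIntegrable (fun x => f x • c) MeasureTheory.volume a b :=
  ⟨h.1.smul_const c, h.2.smul_const c⟩

/-- The Chebyshev-type matrix weight `W(x) = (1-x²)^{-1/2} [[1,x],[x,1]]`. -/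
def Wcheb (x : ℝ) : Matrix (Fin 2) (Fin 2) ℝ :=
  (Real.sqrt (1 - x ^ 2))⁻¹ • !![1, x; x, 1]

/-- The monic matrix Chebyshev-type polynomials
`P̃_n(x) = 2^{-n} [[U_n(x), -U_{n-1}(x)],[-U_{n-1}(x), U_n(x)]]`,
built from Chebyshev polynomials of the second kind (with `U_{-1} = 0`). -/
def Pcheb (n : ℕ) (x : ℝ) : Matrix (Fin 2) (Fin 2) ℝ :=
  ((2 : ℝ) ^ n)⁻¹ •
    !![(Polynomial.Chebyshev.U ℝ n).eval x, -(Polynomial.Chebyshev.U ℝ ((n : ℤ) - 1)).eval x;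
       -(Polynomial.Chebyshev.U ℝ ((n : ℤ) - 1)).eval x, (Polynomial.Chebyshev.U ℝ n).eval x]

/-- the monic matrix polynomials `P̃_n` are orthogonal with respect to the
Chebyshev-type weight, with `∫_{-1}^1 P̃_m W P̃_nᵀ dx = δ_{mn} (π/4ⁿ) Id`. -/
theorem Pcheb_orthogonality (m n : ℕ) :
    ∫ x in (-1 : ℝ)..1, Pcheb m x * Wcheb x * (Pcheb n x)ᵀ =
      if m = n then (π / 4 ^ n) • (1 : Matrix (Fin 2) (Fin 2) ℝ) else 0 := by
  have hfE := wT_intervalIntegrable ((m : ℤ) - n)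
  have hfF := wT_intervalIntegrable ((m : ℤ) + n + 1)
  set c : ℝ := ((2:ℝ) ^ m)⁻¹ * ((2:ℝ) ^ n)⁻¹ with hc
  have hrw : ∀ x : ℝ, Pcheb m x * Wcheb x * (Pcheb n x)ᵀ =
      (c * ((Real.sqrt (1 - x ^ 2))⁻¹ * (Chebyshev.T ℝ ((m:ℤ) - n)).eval x)) •
        (1 : Matrix (Fin 2) (Fin 2) ℝ) +
      (c * ((Real.sqrt (1 - x ^ 2))⁻¹ * (Chebyshev.T ℝ ((m:ℤ) + n + 1)).eval x)) •
        !![(0:ℝ), 1; 1, 0] := by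
    intro x
    have hE := congrArg (Polynomial.eval x) (keyE (m : ℤ) (n : ℤ))
    have hF := congrArg (Polynomial.eval x) (keyF (m : ℤ) (n : ℤ))
    simp only [Polynomial.eval_add, Polynomial.eval_sub, Polynomial.eval_mul,
      Polynomial.eval_X] at hE hF
    have ht : (Pcheb n x)ᵀ = Pcheb n x := by
      ext i j
      rw [Matrix.transpose_apply]
      fin_cases i <;> fin_cases j <;> simp [Pcheb]
    rw [ht]
    ext i j
    fin_cases i <;> fin_cases j <;>
      simp [Pcheb, Wcheb, Matrix.mul_apply, Fin.sum_univ_two, Matrix.one_apply] <;>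
      [linear_combination (c * (Real.sqrt (1 - x ^ 2))⁻¹) * hE;
       linear_combination (c * (Real.sqrt (1 - x ^ 2))⁻¹) * hF;
       linear_combination (c * (Real.sqrt (1 - x ^ 2))⁻¹) * hF;
       linear_combination (c * (Real.sqrt (1 - x ^ 2))⁻¹) * hE]
  simp only [hrw]
  rw [intervalIntegral.integral_add ((hfE.const_mul c).smul_const' _)
      ((hfF.const_mul c).smul_const' _),
    intervalIntegral.integral_smul_const, intervalIntegral.integral_smul_const,
    intervalIntegral.integral_const_mul, intervalIntegral.integral_const_mul,
    integral_wT, integral_wT]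
  have h1 : ¬((m : ℤ) + n + 1 = 0) := by omega
  have h2 : ((m : ℤ) - n = 0) ↔ m = n := by omega
  simp only [h1, if_false, h2, mul_zero, zero_smul, add_zero]
  by_cases h : m = n
  · subst h
    simp only [if_true]
    congr 1
    rw [hc]
    field_simp
    rw [← pow_mul, mul_comm, pow_mul]
    norm_num
  · simp [h]
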